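/- Let 0 < p_- ≤ p_n < ∞ for all n and suppose there exists 0 < c < 1 with M := Σ_n c^{p_n} < ∞. Then ℓ_{p_n} = ℓ_∞ with equivalent norms; more precisely, ‖a‖_∞ ≤ ‖a‖_{p_n} ≤ (max{1,M}^{1/p_-}/c) ‖a‖_∞ for every sequence a. -/
import Mathlib


open scoped ENNReal

/-- Luxemburg quasi-norm of `ℓ_{p_n}` (finite exponents), `∞` if no admissible `λ`. -/
noncomputable def vNorm (p : ℕ → ℝ) (a : ℕ → ℝ) : ℝ≥0∞ :=
  sInf {l : ℝ≥0∞ | 0 < l ∧ l ≠ ⊤ ∧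
    (∑' n, ENNReal.ofReal ((|a n| / l.toReal) ^ p n)) ≤ 1}

/-- The `ℓ_∞` norm of a sequence. -/
noncomputable def supNorm (a : ℕ → ℝ) : ℝ≥0∞ := ⨆ n, ENNReal.ofReal |a n|

theorem stmt_3 (p : ℕ → ℝ) (pm : ℝ) (hpm0 : 0 < pm) (hle : ∀ n, pm ≤ p n)
    (c : ℝ) (hc0 : 0 < c) (hc1 : c < 1) (hM : Summable fun n => c ^ p n)
    (M : ℝ) (hMdef : M = ∑' n, c ^ p n) (a : ℕ → ℝ) :
    supNorm a ≤ vNorm p a ∧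
      vNorm p a ≤ ENNReal.ofReal ((max 1 M) ^ (1 / pm) / c) * supNorm a := by
  have hp : ∀ n, 0 < p n := fun n => hpm0.trans_le (hle n)
  constructor
  · -- supNorm ≤ vNorm
    refine le_sInf fun l hl => ?_
    obtain ⟨hl0, hlt, hsum⟩ := hl
    have hlr : 0 < l.toReal := ENNReal.toReal_pos hl0.ne' hlt
    refine iSup_le fun n => ?_
    have h1 : ENNReal.ofReal ((|a n| / l.toReal) ^ p n) ≤ 1 :=
      le_trans (ENNReal.le_tsum n) hsum
    have hb : (0:ℝ) ≤ |a n| / l.toReal := div_nonneg (abs_nonneg _) hlr.le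
    have h2 : (|a n| / l.toReal) ^ p n ≤ 1 := ENNReal.ofReal_le_one.mp h1
    have h3 : |a n| / l.toReal ≤ 1 := by
      by_contra h
      push_neg at h
      have : (1:ℝ) < (|a n| / l.toReal) ^ p n :=
        Real.one_lt_rpow_iff_of_pos (zero_lt_one.trans h) |>.mpr (Or.inl ⟨h, hp n⟩)
      linarith
    have h4 : |a n| ≤ l.toReal := (div_le_one hlr).mp h3
    calc ENNReal.ofReal |a n| ≤ ENNReal.ofReal l.toReal := ENNReal.ofReal_le_ofReal h4
      _ = l := ENNReal.ofReal_toReal hlt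
  · -- vNorm ≤ K * supNorm
    set K : ℝ := (max 1 M) ^ (1 / pm) / c with hKdef
    have hM0 : 0 ≤ M := hMdef ▸ tsum_nonneg fun n => Real.rpow_nonneg hc0.le _
    have hmax1 : (1:ℝ) ≤ max 1 M := le_max_left _ _
    have hmax0 : (0:ℝ) < max 1 M := lt_of_lt_of_le zero_lt_one hmax1
    have hK : 0 < K := div_pos (Real.rpow_pos_of_pos hmax0 _) hc0
    rcases eq_or_ne (supNorm a) 0 with hsup0 | hsup0
    · -- a = 0
      have ha : ∀ n, a n = 0 := by
        intro n
        have : ENNReal.ofReal |a n| ≤ 0 := hsup0 ▸ le_iSup (fun n => ENNReal.ofReal |a n|) n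
        have := ENNReal.ofReal_eq_zero.mp (le_antisymm this bot_le)
        have := abs_nonneg (a n)
        have : |a n| = 0 := by linarith
        exact abs_eq_zero.mp this
      have hz : ∀ n, (0:ℝ) ^ p n = 0 := fun n => Real.zero_rpow (hp n).ne'
      have hv : vNorm p a ≤ 0 := by
        refine ENNReal.le_of_forall_pos_le_add fun ε hε _ => ?_
        rw [zero_add]
        refine sInf_le ⟨?_, ENNReal.coe_ne_top, ?_⟩
        · exact_mod_cast hε
        · simp [ha, hz]
      rw [hsup0, mul_zero]
      exact hv
    rcases eq_or_ne (supNorm a) ⊤ with hsupT | hsupT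
    · rw [hsupT, ENNReal.mul_top]
      · exact le_top
      · exact (ENNReal.ofReal_pos.mpr hK).ne'
    -- main case
    set S : ℝ := (supNorm a).toReal with hSdef
    have hS : 0 < S := ENNReal.toReal_pos hsup0 hsupT
    have haS : ∀ n, |a n| ≤ S := by
      intro n
      have h1 : ENNReal.ofReal |a n| ≤ supNorm a := le_iSup (fun n => ENNReal.ofReal |a n|) n
      have := ENNReal.toReal_mono hsupT h1
      rwa [ENNReal.toReal_ofReal (abs_nonneg _)] at this
    have hKS : 0 < K * S := mul_pos hK hS
    have hterm : ∀ n, (|a n| / (K * S)) ^ p n ≤ c ^ p n / max 1 M := by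
      intro n
      have h1 : |a n| / (K * S) ≤ 1 / K := by
        rw [div_le_div_iff₀ hKS hK]
        calc |a n| * K ≤ S * K := mul_le_mul_of_nonneg_right (haS n) hK.le
          _ = 1 * (K * S) := by ring
      have h2 : (|a n| / (K * S)) ^ p n ≤ (1 / K) ^ p n :=
        Real.rpow_le_rpow (div_nonneg (abs_nonneg _) hKS.le) h1 (hp n).le
      have h3 : (1 / K) ^ p n = c ^ p n / (max 1 M) ^ (1 / pm * p n) := by
        rw [hKdef, one_div_div, Real.div_rpow hc0.le (Real.rpow_nonneg hmax0.le _),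
          ← Real.rpow_mul hmax0.le]
      have h4 : max 1 M ≤ (max 1 M) ^ (1 / pm * p n) := by
        nth_rewrite 1 [← Real.rpow_one (max 1 M)]
        refine Real.rpow_le_rpow_of_exponent_le hmax1 ?_
        rw [one_div, inv_mul_eq_div, le_div_iff₀ hpm0, one_mul]
        exact hle n
      have h5 : c ^ p n / (max 1 M) ^ (1 / pm * p n) ≤ c ^ p n / max 1 M :=
        div_le_div_of_nonneg_left (Real.rpow_nonneg hc0.le _) hmax0 h4
      calc (|a n| / (K * S)) ^ p n ≤ (1 / K) ^ p n := h2
        _ = c ^ p n / (max 1 M) ^ (1 / pm * p n) := h3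
        _ ≤ c ^ p n / max 1 M := h5
    have hsummem : ENNReal.ofReal (K * S) ∈ {l : ℝ≥0∞ | 0 < l ∧ l ≠ ⊤ ∧
        (∑' n, ENNReal.ofReal ((|a n| / l.toReal) ^ p n)) ≤ 1} := by
      refine ⟨ENNReal.ofReal_pos.mpr hKS, ENNReal.ofReal_ne_top, ?_⟩
      rw [ENNReal.toReal_ofReal hKS.le]
      have hsumm : Summable (fun n => c ^ p n / max 1 M) := hM.div_const _
      calc (∑' n, ENNReal.ofReal ((|a n| / (K * S)) ^ p n))
          ≤ ∑' n, ENNReal.ofReal (c ^ p n / max 1 M) :=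
            ENNReal.tsum_le_tsum fun n => ENNReal.ofReal_le_ofReal (hterm n)
        _ = ENNReal.ofReal (∑' n, c ^ p n / max 1 M) :=
            (ENNReal.ofReal_tsum_of_nonneg (fun n =>
              div_nonneg (Real.rpow_nonneg hc0.le _) hmax0.le) hsumm).symm
        _ ≤ 1 := by
            rw [tsum_div_const, ← hMdef]
            exact ENNReal.ofReal_le_one.mpr ((div_le_one hmax0).mpr (le_max_right _ _))
    calc vNorm p a ≤ ENNReal.ofReal (K * S) := sInf_le hsummem
      _ = ENNReal.ofReal K * ENNReal.ofReal S := ENNReal.ofReal_mul hK.le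
      _ = ENNReal.ofReal K * supNorm a := by rw [hSdef, ENNReal.ofReal_toReal hsupT]
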